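/- The consensus protocol ẋ = Dx with D = -Hᵀ C H on a connected undirected graph G (H the coboundary matrix, C = diag(C₁, C₂) the edge conductance matrix split over a spanning tree G̃ and the remaining edges) is convergent if and only if the (n-1)×(n-1) matrix C₁ + Qᵀ C₂ Q is positive definite, where Q is the cycle incidence matrix associated with G̃. -/

import Mathlib

open Matrix Filter

/-- A row of a coboundary (incidence) matrix of an oriented graph: exactly one
`+1` (the positive end), one `-1` (the negative end), and zeros elsewhere. -/
def IsEdgeRow {n : ℕ} (r : Fin n → ℝ) : Prop :=
  ∃ a b : Fin n, a ≠ b ∧ r a = 1 ∧ r b = -1 ∧ ∀ j, j ≠ a → j ≠ b → r j = 0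

attribute [local instance] Matrix.linftyOpNormedRing Matrix.linftyOpNormedAlgebra


lemma IsEdgeRow.sum_eq_zero {n : ℕ} {r : Fin n → ℝ} (h : IsEdgeRow r) :
    ∑ j, r j = 0 := by
  obtain ⟨a, b, hab, ha, hb, h0⟩ := h
  have : ∑ j, r j = ∑ j ∈ ({a, b} : Finset (Fin n)), r j := by
    refine (Finset.sum_subset (Finset.subset_univ _) ?_).symm
    intro j _ hj
    simp only [Finset.mem_insert, Finset.mem_singleton, not_or] at hj
    exact h0 j hj.1 hj.2
  rw [this, Finset.sum_pair hab, ha, hb]; ring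

lemma edge_mulVec_one {m n : ℕ} (A : Matrix (Fin m) (Fin n) ℝ)
    (h : ∀ i, IsEdgeRow (A i)) : A.mulVec (fun _ => 1) = 0 := by
  funext i
  simp only [Matrix.mulVec, dotProduct, mul_one]
  exact (h i).sum_eq_zero

lemma block_identity {n c : ℕ}
    (Ht : Matrix (Fin (n-1)) (Fin n) ℝ) (Q : Matrix (Fin c) (Fin (n-1)) ℝ)
    (c₁ : Fin (n-1) → ℝ) (c₂ : Fin c → ℝ) :
    (Matrix.fromRows Ht ((-Q) * Ht))ᵀ *
      (Matrix.fromBlocks (Matrix.diagonal c₁) 0 0 (Matrix.diagonal c₂)) *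
      (Matrix.fromRows Ht ((-Q) * Ht)) =
    Htᵀ * (Matrix.diagonal c₁ + Qᵀ * Matrix.diagonal c₂ * Q) * Ht := by
  rw [transpose_fromRows, fromCols_mul_fromBlocks, fromCols_mul_fromRows]
  simp only [Matrix.mul_zero, Matrix.zero_mul, add_zero, zero_add, Matrix.transpose_mul,
    Matrix.transpose_neg, Matrix.mul_neg, Matrix.neg_mul, neg_neg]
  rw [Matrix.mul_add, Matrix.add_mul]
  rw [show Htᵀ * Qᵀ * Matrix.diagonal c₂ * (Q * Ht) = Htᵀ * (Qᵀ * Matrix.diagonal c₂ * Q) * Ht by simp only [Matrix.mul_assoc]]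

lemma coercive {n k : ℕ} (Ht : Matrix (Fin k) (Fin n) ℝ) (M : Matrix (Fin k) (Fin k) ℝ)
    (hM : M.PosDef)
    (hker : ∀ u : Fin n → ℝ, Ht.mulVec u = 0 → ∑ i, u i = 0 → u = 0) :
    ∃ c > 0, ∀ u : Fin n → ℝ, ∑ i, u i = 0 →
      c * ∑ i, (u i)^2 ≤ Ht.mulVec u ⬝ᵥ M.mulVec (Ht.mulVec u) := by
  set q : (Fin n → ℝ) → ℝ := fun u => Ht.mulVec u ⬝ᵥ M.mulVec (Ht.mulVec u) with hq
  have hqpos : ∀ u : Fin n → ℝ, ∑ i, u i = 0 → u ≠ 0 → 0 < q u := by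
    intro u hsum hu
    have hHu : Ht.mulVec u ≠ 0 := fun h => hu (hker u h hsum)
    have := hM.dotProduct_mulVec_pos hHu
    simpa [hq, star_trivial] using this
  have hqcont : Continuous q := by
    have h1 : Continuous fun u : Fin n → ℝ => Ht.mulVec u :=
      Ht.mulVecLin.continuous_of_finiteDimensional
    have h2 : Continuous fun w : Fin k → ℝ => w ⬝ᵥ M.mulVec w := by
      have : (fun w : Fin k → ℝ => w ⬝ᵥ M.mulVec w)
          = fun w => ∑ i, w i * ∑ j, M i j * w j := rfl
      rw [this]
      exact continuous_finset_sum _ fun i _ => (continuous_apply i).mul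
        (continuous_finset_sum _ fun j _ => continuous_const.mul (continuous_apply j))
    exact h2.comp h1
  have hNcont : Continuous fun u : Fin n → ℝ => ∑ i, (u i)^2 :=
    continuous_finset_sum _ fun i _ => (continuous_apply i).pow 2
  have hScont : Continuous fun u : Fin n → ℝ => ∑ i, u i :=
    continuous_finset_sum _ fun i _ => continuous_apply i
  by_cases hW : ∀ u : Fin n → ℝ, ∑ i, u i = 0 → u = 0
  · refine ⟨1, one_pos, fun u hsum => ?_⟩
    rw [hW u hsum]
    simp [hq]
  · push_neg at hW
    obtain ⟨u₀, hu₀sum, hu₀⟩ := hW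
    set K : Set (Fin n → ℝ) := {u | ∑ i, u i = 0 ∧ ∑ i, (u i)^2 = 1} with hK
    have hNpos : ∀ u : Fin n → ℝ, u ≠ 0 → 0 < ∑ i, (u i)^2 := by
      intro u hu
      obtain ⟨i, hi⟩ := Function.ne_iff.1 hu
      exact Finset.sum_pos' (fun j _ => sq_nonneg _)
        ⟨i, Finset.mem_univ i, sq_pos_of_ne_zero hi⟩
    -- normalization map
    have hnorm : ∀ u : Fin n → ℝ, ∑ i, u i = 0 → u ≠ 0 →
        ((Real.sqrt (∑ i, (u i)^2))⁻¹ • u) ∈ K ∧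
        q ((Real.sqrt (∑ i, (u i)^2))⁻¹ • u) = (∑ i, (u i)^2)⁻¹ * q u := by
      intro u hsum hu
      have hN := hNpos u hu
      have hr : Real.sqrt (∑ i, (u i)^2) > 0 := Real.sqrt_pos.2 hN
      have hrr : (Real.sqrt (∑ i, (u i)^2))⁻¹ * (Real.sqrt (∑ i, (u i)^2))⁻¹
          = (∑ i, (u i)^2)⁻¹ := by
        rw [← mul_inv]
        rw [Real.mul_self_sqrt hN.le]
      refine ⟨⟨?_, ?_⟩, ?_⟩
      · simp only [Pi.smul_apply, smul_eq_mul, ← Finset.mul_sum, hsum, mul_zero]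
      · simp only [Pi.smul_apply, smul_eq_mul, mul_pow, ← Finset.mul_sum, ← sq]
        rw [inv_pow, Real.sq_sqrt hN.le]
        exact inv_mul_cancel₀ hN.ne'
      · simp only [hq, Matrix.mulVec_smul, smul_dotProduct, dotProduct_smul,
          smul_eq_mul, ← mul_assoc, hrr]
    have hKcomp : IsCompact K := by
      apply Metric.isCompact_of_isClosed_isBounded
      · exact (isClosed_singleton.preimage hScont).inter (isClosed_singleton.preimage hNcont)
      · rw [Metric.isBounded_iff_subset_closedBall 0]
        refine ⟨1, fun u hu => ?_⟩
        rw [Metric.mem_closedBall, dist_zero_right]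
        rw [pi_norm_le_iff_of_nonneg zero_le_one]
        intro i
        rw [Real.norm_eq_abs, ← sq_le_one_iff_abs_le_one]
        calc (u i)^2 ≤ ∑ j, (u j)^2 :=
              Finset.single_le_sum (fun j _ => sq_nonneg (u j)) (Finset.mem_univ i)
          _ = 1 := hu.2
    have hKne : K.Nonempty := ⟨_, (hnorm u₀ hu₀sum hu₀).1⟩
    obtain ⟨v₀, hv₀K, hv₀min⟩ := hKcomp.exists_isMinOn hKne hqcont.continuousOn
    have hv₀ne : v₀ ≠ 0 := by
      intro h
      rw [h] at hv₀K
      simpa using hv₀K.2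
    have hc : 0 < q v₀ := hqpos v₀ hv₀K.1 hv₀ne
    refine ⟨q v₀, hc, fun u hsum => ?_⟩
    by_cases hu : u = 0
    · simp [hu, hq]
    · have hN := hNpos u hu
      obtain ⟨hmem, hqv⟩ := hnorm u hsum hu
      have : q v₀ ≤ q _ := hv₀min hmem
      rw [hqv] at this
      have h2 : q v₀ * ∑ i, (u i)^2 ≤ (∑ i, (u i)^2)⁻¹ * q u * ∑ i, (u i)^2 := by
        exact mul_le_mul_of_nonneg_right this hN.le
      rw [mul_comm ((∑ i, (u i)^2)⁻¹) (q u), mul_assoc, inv_mul_cancel₀ hN.ne', mul_one] at h2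
      exact h2

lemma sum_transpose_mulVec {n k : ℕ} (Ht : Matrix (Fin k) (Fin n) ℝ)
    (hone : Ht.mulVec (fun _ => 1) = 0) (w : Fin k → ℝ) :
    ∑ i, Htᵀ.mulVec w i = 0 := by
  have hrow : ∀ kk, ∑ i, Ht kk i = 0 := by
    intro kk
    have := congrFun hone kk
    simpa [Matrix.mulVec, dotProduct] using this
  simp only [Matrix.mulVec, dotProduct, Matrix.transpose_apply]
  rw [Finset.sum_comm]
  simp only [← Finset.sum_mul, hrow, zero_mul, Finset.sum_const_zero]

lemma quad_identity {n k : ℕ} (Ht : Matrix (Fin k) (Fin n) ℝ)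
    (M : Matrix (Fin k) (Fin k) ℝ) (v : Fin n → ℝ) :
    v ⬝ᵥ (-(Htᵀ * M * Ht)).mulVec v
      = -(Ht.mulVec v ⬝ᵥ M.mulVec (Ht.mulVec v)) := by
  rw [Matrix.neg_mulVec, dotProduct_neg, neg_inj,
    ← Matrix.mulVec_mulVec, ← Matrix.mulVec_mulVec,
    Matrix.dotProduct_mulVec v Htᵀ, Matrix.vecMul_transpose]

lemma forward_conv {n k : ℕ} (hn : 1 ≤ n)
    (Ht : Matrix (Fin k) (Fin n) ℝ) (M : Matrix (Fin k) (Fin k) ℝ)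
    (hone : Ht.mulVec (fun _ => 1) = 0)
    (c : ℝ) (hc : 0 < c)
    (hcoer : ∀ u : Fin n → ℝ, ∑ i, u i = 0 →
      c * ∑ i, (u i)^2 ≤ Ht.mulVec u ⬝ᵥ M.mulVec (Ht.mulVec u))
    (x : ℝ → Fin n → ℝ)
    (hx : ∀ t, HasDerivAt x ((-(Htᵀ * M * Ht)).mulVec (x t)) t)
    (i j : Fin n) : Tendsto (fun t => x t i - x t j) atTop (nhds 0) := by
  set D : Matrix (Fin n) (Fin n) ℝ := -(Htᵀ * M * Ht) with hD
  -- column sums of D vanish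
  have hcolsum : ∀ v : Fin n → ℝ, ∑ i, D.mulVec v i = 0 := by
    intro v
    have : D.mulVec v = -(Htᵀ.mulVec ((M * Ht).mulVec v)) := by
      rw [hD, Matrix.neg_mulVec, Matrix.mulVec_mulVec, Matrix.mul_assoc]
    rw [this]
    simp only [Pi.neg_apply, Finset.sum_neg_distrib]
    rw [sum_transpose_mulVec Ht hone]
    simp
  -- D kills constants
  have hconst : ∀ m : ℝ, D.mulVec (fun _ => m) = 0 := by
    intro m
    have h1 : (fun _ : Fin n => m) = m • (fun _ : Fin n => (1:ℝ)) := by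
      funext i; simp
    rw [h1, Matrix.mulVec_smul, hD, Matrix.neg_mulVec, ← Matrix.mulVec_mulVec, hone]
    simp
  -- sum of x is constant
  have hsx : ∀ t, HasDerivAt (fun s => ∑ i, x s i) (∑ i, D.mulVec (x t) i) t :=
    fun t => HasDerivAt.fun_sum (fun i _ => hasDerivAt_pi.1 (hx t) i)
  have hsconst : ∀ t, ∑ i, x t i = ∑ i, x 0 i := by
    intro t
    have hdiff : Differentiable ℝ (fun s => ∑ i, x s i) :=
      fun t => (hsx t).differentiableAt
    have : ∀ s, deriv (fun s => ∑ i, x s i) s = 0 := by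
      intro s
      rw [(hsx s).deriv, hcolsum]
    exact is_const_of_deriv_eq_zero hdiff this t 0
  set m : ℝ := (∑ i, x 0 i) / n with hm
  set u : ℝ → Fin n → ℝ := fun t => x t - (fun _ => m) with hu
  have hu' : ∀ t, HasDerivAt u (D.mulVec (u t)) t := by
    intro t
    have h1 : HasDerivAt u (D.mulVec (x t)) t := (hx t).sub_const _
    have h2 : D.mulVec (u t) = D.mulVec (x t) := by
      rw [hu]
      simp only [Pi.sub_apply]
      rw [show (x t - fun _ => m) = x t + (-1 : ℝ) • (fun _ => m) by funext; simp [sub_eq_add_neg],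
        Matrix.mulVec_add, Matrix.mulVec_smul, hconst]
      simp
    rw [h2]
    exact h1
  have husum : ∀ t, ∑ i, u t i = 0 := by
    intro t
    simp only [hu, Pi.sub_apply, Finset.sum_sub_distrib, hsconst t, Finset.sum_const,
      Finset.card_univ, Fintype.card_fin, nsmul_eq_mul, hm]
    rw [mul_div_cancel₀ _ (Nat.cast_ne_zero.2 (by omega : n ≠ 0))]
    ring
  -- Lyapunov function
  set V : ℝ → ℝ := fun t => ∑ i, (u t i)^2 with hV
  set V' : ℝ → ℝ := fun t => ∑ i, (2 * u t i * D.mulVec (u t) i) with hV'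
  have hVd : ∀ t, HasDerivAt V (V' t) t := by
    intro t
    refine HasDerivAt.fun_sum (fun i _ => ?_)
    have h1 : HasDerivAt (fun s => u s i) (D.mulVec (u t) i) t :=
      hasDerivAt_pi.1 (hu' t) i
    have := h1.fun_pow 2
    simpa [mul_comm, mul_assoc, mul_left_comm] using this
  have hV'le : ∀ t, V' t ≤ -(2*c) * V t := by
    intro t
    have h1 : V' t = 2 * (u t ⬝ᵥ D.mulVec (u t)) := by
      simp only [hV', dotProduct, Finset.mul_sum]
      congr 1; funext i; ring
    have h2 : u t ⬝ᵥ D.mulVec (u t) = -(Ht.mulVec (u t) ⬝ᵥ M.mulVec (Ht.mulVec (u t))) :=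
      quad_identity Ht M (u t)
    have h3 := hcoer (u t) (husum t)
    rw [h1, h2]
    simp only [hV]
    nlinarith
  have hVnonneg : ∀ t, 0 ≤ V t := fun t => Finset.sum_nonneg fun i _ => sq_nonneg _
  -- exponential decay
  have hgd : ∀ t, HasDerivAt (fun s => V s * Real.exp (2*c*s))
      (V' t * Real.exp (2*c*t) + V t * (Real.exp (2*c*t) * (2*c))) t := by
    intro t
    have hexp : HasDerivAt (fun s : ℝ => Real.exp (2*c*s)) (Real.exp (2*c*t) * (2*c)) t := by
      have h1 : HasDerivAt (fun s : ℝ => 2*c*s) (2*c) t := by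
        simpa using (hasDerivAt_id t).const_mul (2*c)
      exact (Real.hasDerivAt_exp (2*c*t)).comp t h1
    exact (hVd t).mul hexp
  have hanti : Antitone (fun s => V s * Real.exp (2*c*s)) := by
    apply antitone_of_deriv_nonpos
    · exact fun t => (hgd t).differentiableAt
    · intro t
      rw [(hgd t).deriv]
      have := hV'le t
      have he := Real.exp_pos (2*c*t)
      nlinarith
  have hVle : ∀ t : ℝ, 0 ≤ t → V t ≤ V 0 * Real.exp (-(2*c*t)) := by
    intro t ht
    have := hanti ht
    simp only [mul_zero, Real.exp_zero, mul_one] at this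
    rw [Real.exp_neg, ← div_eq_mul_inv, le_div_iff₀ (Real.exp_pos _)]
    exact this
  -- V tends to 0
  have hVtend : Tendsto V atTop (nhds 0) := by
    have hub : Tendsto (fun t => V 0 * Real.exp (-(2*c*t))) atTop (nhds 0) := by
      have h1 : Tendsto (fun t : ℝ => -(2*c*t)) atTop atBot := by
        apply tendsto_neg_atTop_atBot.comp
        exact Tendsto.const_mul_atTop (by positivity) tendsto_id
      have h2 : Tendsto (fun t : ℝ => Real.exp (-(2*c*t))) atTop (nhds 0) :=
        Real.tendsto_exp_atBot.comp h1
      simpa using h2.const_mul (V 0)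
    refine tendsto_of_tendsto_of_tendsto_of_le_of_le' tendsto_const_nhds hub ?_ ?_
    · exact Eventually.of_forall hVnonneg
    · filter_upwards [eventually_ge_atTop (0:ℝ)] with t ht using hVle t ht
  -- each component of u tends to 0
  have hutend : ∀ i, Tendsto (fun t => u t i) atTop (nhds 0) := by
    intro i
    have hsq : Tendsto (fun t => Real.sqrt (V t)) atTop (nhds 0) := by
      have := (Real.continuous_sqrt.tendsto 0).comp hVtend
      simpa [Function.comp_def] using this
    have habs : ∀ t, |u t i| ≤ Real.sqrt (V t) := by
      intro t
      rw [← Real.sqrt_sq_eq_abs]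
      apply Real.sqrt_le_sqrt
      exact Finset.single_le_sum (fun j _ => sq_nonneg (u t j)) (Finset.mem_univ i)
    refine tendsto_of_tendsto_of_tendsto_of_le_of_le ?_ hsq
      (fun t => neg_le_of_abs_le (habs t)) (fun t => le_of_abs_le (habs t))
    simpa using hsq.neg
  have : Tendsto (fun t => u t i - u t j) atTop (nhds 0) := by
    simpa using (hutend i).sub (hutend j)
  have heq : (fun t => x t i - x t j) = fun t => u t i - u t j := by
    funext t; simp [hu]
  rw [heq]
  exact this

lemma sum_transpose_mulVec' {n k : ℕ} (Ht : Matrix (Fin k) (Fin n) ℝ)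
    (hone : Ht.mulVec (fun _ => 1) = 0) (w : Fin k → ℝ) :
    ∑ i, Htᵀ.mulVec w i = 0 := by
  have hrow : ∀ kk, ∑ i, Ht kk i = 0 := by
    intro kk
    have := congrFun hone kk
    simpa [Matrix.mulVec, dotProduct] using this
  simp only [Matrix.mulVec, dotProduct, Matrix.transpose_apply]
  rw [Finset.sum_comm]
  simp only [← Finset.sum_mul, hrow, zero_mul, Finset.sum_const_zero]

lemma quad_identity' {n k : ℕ} (Ht : Matrix (Fin k) (Fin n) ℝ)
    (M : Matrix (Fin k) (Fin k) ℝ) (v : Fin n → ℝ) :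
    v ⬝ᵥ (-(Htᵀ * M * Ht)).mulVec v
      = -(Ht.mulVec v ⬝ᵥ M.mulVec (Ht.mulVec v)) := by
  rw [Matrix.neg_mulVec, dotProduct_neg, neg_inj,
    ← Matrix.mulVec_mulVec, ← Matrix.mulVec_mulVec,
    Matrix.dotProduct_mulVec v Htᵀ, Matrix.vecMul_transpose]

lemma hasDerivAt_mulVec {n m : ℕ} (A : Matrix (Fin m) (Fin n) ℝ) {x : ℝ → Fin n → ℝ}
    {v : Fin n → ℝ} {t : ℝ} (hx : HasDerivAt x v t) :
    HasDerivAt (fun s => A.mulVec (x s)) (A.mulVec v) t := by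
  rw [hasDerivAt_pi]
  intro i
  simp only [Matrix.mulVec, dotProduct]
  exact HasDerivAt.fun_sum fun j _ => ((hasDerivAt_pi.1 hx) j).const_mul (A i j)

lemma hasDerivAt_dot {n : ℕ} {f g : ℝ → Fin n → ℝ} {f' g' : Fin n → ℝ} {t : ℝ}
    (hf : HasDerivAt f f' t) (hg : HasDerivAt g g' t) :
    HasDerivAt (fun s => f s ⬝ᵥ g s) (f' ⬝ᵥ g t + f t ⬝ᵥ g') t := by
  simp only [dotProduct, ← Finset.sum_add_distrib]
  exact HasDerivAt.fun_sum fun i _ =>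
    ((hasDerivAt_pi.1 hf i).mul (hasDerivAt_pi.1 hg i))

lemma backward_posdef {n k : ℕ}
    (Ht : Matrix (Fin k) (Fin n) ℝ) (M : Matrix (Fin k) (Fin k) ℝ)
    (hsymm : Mᵀ = M)
    (hone : Ht.mulVec (fun _ => 1) = 0)
    (hsurj : Function.Surjective Ht.mulVecLin)
    (hconv : ∀ x : ℝ → Fin n → ℝ,
      (∀ t, HasDerivAt x ((-(Htᵀ * M * Ht)).mulVec (x t)) t) →
      ∀ i j : Fin n, Tendsto (fun t => x t i - x t j) atTop (nhds 0)) :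
    ∀ y : Fin k → ℝ, y ≠ 0 → 0 < y ⬝ᵥ M.mulVec y := by
  intro y hy
  by_contra hq
  push_neg at hq
  obtain ⟨x₀, hx₀⟩ := hsurj y
  rw [Matrix.mulVecLin_apply] at hx₀
  -- n must be positive
  have hn : 1 ≤ n := by
    by_contra h
    have hn0 : n = 0 := by omega
    apply hy
    rw [← hx₀]
    funext kk
    subst hn0
    simp [Matrix.mulVec, dotProduct]
  set D : Matrix (Fin n) (Fin n) ℝ := -(Htᵀ * M * Ht) with hD
  have hDsymm : Dᵀ = D := by
    rw [hD]
    simp only [Matrix.transpose_neg, Matrix.transpose_mul, Matrix.transpose_transpose, hsymm]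
    rw [Matrix.mul_assoc]
  -- the solution
  obtain ⟨x, hx0, hx⟩ : ∃ x : ℝ → (Fin n → ℝ), x 0 = x₀ ∧
      ∀ t, HasDerivAt x (D.mulVec (x t)) t := by
    let L : Matrix (Fin n) (Fin n) ℝ →ₗ[ℝ] (Fin n → ℝ) :=
      { toFun := fun A => A.mulVec x₀
        map_add' := fun A B => Matrix.add_mulVec A B x₀
        map_smul' := fun r A => (smul_mulVec r A x₀) }
    refine ⟨fun t => (NormedSpace.exp (t • D)).mulVec x₀, ?_, fun t => ?_⟩
    · simp [NormedSpace.exp_zero, Matrix.one_mulVec]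
    · have h1 : HasDerivAt (fun t : ℝ => NormedSpace.exp (t • D))
          (D * NormedSpace.exp (t • D)) t := hasDerivAt_exp_smul_const' D t
      have h2 := (L.toContinuousLinearMap.hasFDerivAt).comp_hasDerivAt t h1
      have h3 : L.toContinuousLinearMap (D * NormedSpace.exp (t • D))
          = D.mulVec ((NormedSpace.exp (t • D)).mulVec x₀) := by
        simp only [LinearMap.coe_toContinuousLinearMap', L, LinearMap.coe_mk, AddHom.coe_mk]
        rw [← Matrix.mulVec_mulVec]
      exact h2.congr_deriv h3
  have htend := hconv x hx
  -- sum of x is constant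
  have hcolsum : ∀ v : Fin n → ℝ, ∑ i, D.mulVec v i = 0 := by
    intro v
    have : D.mulVec v = -(Htᵀ.mulVec ((M * Ht).mulVec v)) := by
      rw [hD, Matrix.neg_mulVec, Matrix.mulVec_mulVec, Matrix.mul_assoc]
    rw [this]
    simp only [Pi.neg_apply, Finset.sum_neg_distrib]
    rw [sum_transpose_mulVec' Ht hone]
    simp
  have hsx : ∀ t, HasDerivAt (fun s => ∑ i, x s i) (∑ i, D.mulVec (x t) i) t :=
    fun t => HasDerivAt.fun_sum (fun i _ => hasDerivAt_pi.1 (hx t) i)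
  have hsconst : ∀ t, ∑ i, x t i = ∑ i, x 0 i := by
    intro t
    exact is_const_of_deriv_eq_zero (fun t => (hsx t).differentiableAt)
      (fun s => by rw [(hsx s).deriv, hcolsum]) t 0
  set m : ℝ := (∑ i, x 0 i) / n with hm
  have hnR : (n : ℝ) ≠ 0 := Nat.cast_ne_zero.2 (by omega)
  have hs0 : ∑ i, x 0 i = n * m := by rw [hm, mul_div_cancel₀ _ hnR]
  -- each component tends to m
  have hxtend : ∀ i, Tendsto (fun t => x t i) atTop (nhds m) := by
    intro i
    have h1 : ∀ t, x t i - m = (∑ j, (x t i - x t j)) / n := by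
      intro t
      rw [Finset.sum_sub_distrib, hsconst t, hs0]
      simp only [Finset.sum_const, Finset.card_univ, Fintype.card_fin, nsmul_eq_mul]
      field_simp
    have h2 : Tendsto (fun t => x t i - m) atTop (nhds 0) := by
      have h3 : Tendsto (fun t => (∑ j, (x t i - x t j)) / n) atTop (nhds 0) := by
        have h4 : Tendsto (fun t => ∑ j, (x t i - x t j)) atTop (nhds 0) := by
          have := tendsto_finset_sum Finset.univ (fun j _ => htend i j)
          simpa using this
        simpa using h4.div_const (n : ℝ)
      simpa only [← h1] using h3
    have := h2.add_const m
    simpa using this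
  -- the energy g
  set w : ℝ → Fin n → ℝ := fun t => D.mulVec (x t) with hw
  have hwd : ∀ t, HasDerivAt w (D.mulVec (w t)) t := fun t => hasDerivAt_mulVec D (hx t)
  set g : ℝ → ℝ := fun t => x t ⬝ᵥ w t with hg
  have hgd : ∀ t, HasDerivAt g (w t ⬝ᵥ w t + x t ⬝ᵥ D.mulVec (w t)) t :=
    fun t => hasDerivAt_dot (hx t) (hwd t)
  have hsymdot : ∀ t, x t ⬝ᵥ D.mulVec (w t) = w t ⬝ᵥ w t := by
    intro t
    rw [Matrix.dotProduct_mulVec, ← hDsymm, Matrix.vecMul_transpose]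
  have hgd' : ∀ t, HasDerivAt g (2 * (w t ⬝ᵥ w t)) t := by
    intro t
    have := hgd t
    rw [hsymdot t] at this
    convert this using 1
    ring
  have hgmono : Monotone g := by
    apply monotone_of_deriv_nonneg (fun t => (hgd' t).differentiableAt)
    intro t
    rw [(hgd' t).deriv]
    have : 0 ≤ w t ⬝ᵥ w t := Finset.sum_nonneg fun i _ => mul_self_nonneg _
    linarith
  have hg0 : 0 ≤ g 0 := by
    have : g 0 = -(Ht.mulVec x₀ ⬝ᵥ M.mulVec (Ht.mulVec x₀)) := by
      show x 0 ⬝ᵥ D.mulVec (x 0) = _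
      rw [hx0, hD]
      exact quad_identity' Ht M x₀
    rw [this, hx₀]
    linarith
  -- the norm f
  set f : ℝ → ℝ := fun t => ∑ i, (x t i)^2 with hf
  have hfd : ∀ t, HasDerivAt f (2 * g t) t := by
    intro t
    have h1 : HasDerivAt (fun s => x s ⬝ᵥ x s) (D.mulVec (x t) ⬝ᵥ x t + x t ⬝ᵥ D.mulVec (x t)) t :=
      hasDerivAt_dot (hx t) (hx t)
    have h2 : D.mulVec (x t) ⬝ᵥ x t = x t ⬝ᵥ D.mulVec (x t) := dotProduct_comm _ _
    rw [h2] at h1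
    have h3 : (fun s => x s ⬝ᵥ x s) = f := by
      funext s
      simp [hf, dotProduct, sq]
    rw [h3] at h1
    convert h1 using 1
    simp [hg, hw]
    ring
  have hfmono : ∀ t : ℝ, 0 ≤ t → f 0 ≤ f t := by
    intro t ht
    have hmono : MonotoneOn f (Set.Ici (0:ℝ)) := by
      apply monotoneOn_of_deriv_nonneg (convex_Ici 0)
      · exact Continuous.continuousOn (by
          exact continuous_iff_continuousAt.2 fun s => (hfd s).differentiableAt.continuousAt)
      · intro s hs
        exact (hfd s).differentiableAt.differentiableWithinAt
      · intro s hs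
        rw [interior_Ici] at hs
        rw [(hfd s).deriv]
        have := hgmono (le_of_lt hs)
        linarith
    exact hmono Set.self_mem_Ici ht ht
  -- f tends to n * m^2
  have hftend : Tendsto f atTop (nhds (∑ _i : Fin n, m^2)) := by
    apply tendsto_finset_sum
    intro i _
    exact (hxtend i).pow 2
  have hfle : f 0 ≤ ∑ _i : Fin n, m^2 := by
    apply ge_of_tendsto hftend
    filter_upwards [eventually_ge_atTop (0:ℝ)] with t ht using hfmono t ht
  -- conclude x₀ is constant
  have hsum_sq : ∑ i, (x 0 i - m)^2 = f 0 - ∑ _i : Fin n, m^2 := by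
    have : ∑ i, (x 0 i - m)^2 = ∑ i, ((x 0 i)^2 - 2*m*(x 0 i) + m^2) := by
      congr 1; funext i; ring
    rw [this, Finset.sum_add_distrib, Finset.sum_sub_distrib, ← Finset.mul_sum, hs0]
    simp only [hf, Finset.sum_const, Finset.card_univ, Fintype.card_fin, nsmul_eq_mul]
    ring
  have hzero : ∑ i, (x 0 i - m)^2 = 0 := by
    have h1 : ∑ i, (x 0 i - m)^2 ≤ 0 := by rw [hsum_sq]; linarith
    have h2 : 0 ≤ ∑ i, (x 0 i - m)^2 := Finset.sum_nonneg fun i _ => sq_nonneg _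
    linarith
  have hxconst : ∀ i, x 0 i = m := by
    intro i
    have h5 := (Finset.sum_eq_zero_iff_of_nonneg (fun j _ => sq_nonneg (x 0 j - m))).1 hzero i
      (Finset.mem_univ i)
    have := sq_eq_zero_iff.1 h5
    linarith
  apply hy
  rw [← hx₀]
  have hxc : x₀ = fun _ => m := by rw [← hx0]; funext i; exact hxconst i
  rw [hxc]
  have h1 : (fun _ : Fin n => m) = m • (fun _ : Fin n => (1:ℝ)) := by funext i; simp
  rw [h1, Matrix.mulVec_smul, hone, smul_zero]

/-- The CP `ẋ = Dx` with `D = -HᵀCH` on a connected undirected graph (here `H`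
is the coboundary matrix split as `(H̃; B)` over a spanning tree `G̃` and the
remaining edges, `B = -QH̃` with `Q` the cycle incidence matrix, and
`C = diag(C₁, C₂)` the edge conductance matrix, conductances possibly negative)
is convergent iff the `(n-1)×(n-1)` matrix `C₁ + QᵀC₂Q` is positive definite. -/
theorem consensus_undirected_iff_posdef {n c : ℕ}
    (Ht : Matrix (Fin (n - 1)) (Fin n) ℝ)
    (B : Matrix (Fin c) (Fin n) ℝ)
    (Q : Matrix (Fin c) (Fin (n - 1)) ℝ)
    (c₁ : Fin (n - 1) → ℝ) (c₂ : Fin c → ℝ)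
    (hHtRows : ∀ i, IsEdgeRow (Ht i))
    (hBRows : ∀ k, IsEdgeRow (B k))
    (hrank : Ht.rank = n - 1)
    (hQ : B = (-Q) * Ht) :
    letI H : Matrix (Fin (n - 1) ⊕ Fin c) (Fin n) ℝ := Matrix.fromRows Ht B
    letI C : Matrix (Fin (n - 1) ⊕ Fin c) (Fin (n - 1) ⊕ Fin c) ℝ :=
      Matrix.fromBlocks (Matrix.diagonal c₁) 0 0 (Matrix.diagonal c₂)
    letI D : Matrix (Fin n) (Fin n) ℝ := -(Hᵀ * C * H)
    ((∀ x : ℝ → (Fin n → ℝ), (∀ t, HasDerivAt x (D.mulVec (x t)) t) →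
        ∀ i j : Fin n, Tendsto (fun t => x t i - x t j) atTop (nhds 0)) ↔
      (Matrix.diagonal c₁ + Qᵀ * Matrix.diagonal c₂ * Q).PosDef) := by
  set M : Matrix (Fin (n-1)) (Fin (n-1)) ℝ :=
    Matrix.diagonal c₁ + Qᵀ * Matrix.diagonal c₂ * Q with hM
  have hone : Ht.mulVec (fun _ => 1) = 0 := edge_mulVec_one Ht hHtRows
  have hsymmM : Mᵀ = M := by
    rw [hM]
    simp only [Matrix.transpose_add, Matrix.transpose_mul, Matrix.transpose_transpose,
      Matrix.diagonal_transpose]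
    rw [Matrix.mul_assoc]
  have hDeq : -((Matrix.fromRows Ht B)ᵀ *
      Matrix.fromBlocks (Matrix.diagonal c₁) 0 0 (Matrix.diagonal c₂) *
      Matrix.fromRows Ht B) = -(Htᵀ * M * Ht) := by
    rw [hQ, block_identity, hM]
  rw [hDeq]
  have hsurj : Function.Surjective Ht.mulVecLin := by
    rw [← LinearMap.range_eq_top]
    apply Submodule.eq_top_of_finrank_eq
    rw [← Matrix.rank] at *
    simp [hrank]
  constructor
  · intro hconv
    refine Matrix.PosDef.of_dotProduct_mulVec_pos ?_ ?_
    · rw [Matrix.IsHermitian, Matrix.conjTranspose_eq_transpose_of_trivial, hsymmM]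
    · intro y hy
      have := backward_posdef Ht M hsymmM hone hsurj hconv y hy
      simpa [star_trivial] using this
  · intro hpd x hx i j
    by_cases hn : n ≤ 1
    · haveI : Subsingleton (Fin n) := by
        rcases Nat.le_one_iff_eq_zero_or_eq_one.1 hn with h | h <;> subst h <;> infer_instance
      have hij : i = j := Subsingleton.elim i j
      subst hij
      simp only [sub_self]
      exact tendsto_const_nhds
    · push_neg at hn
      have hn1 : 1 ≤ n := by omega
      have hker : ∀ u : Fin n → ℝ, Ht.mulVec u = 0 → ∑ i, u i = 0 → u = 0 := by
        intro u hu hsum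
        have hkerEq : LinearMap.ker Ht.mulVecLin
            = Submodule.span ℝ {(fun _ => 1 : Fin n → ℝ)} := by
          symm
          apply Submodule.eq_of_le_of_finrank_eq
          · rw [Submodule.span_singleton_le_iff_mem, LinearMap.mem_ker,
              Matrix.mulVecLin_apply, hone]
          · rw [finrank_span_singleton (by
              intro h; have := congrFun h ⟨0, hn1⟩; norm_num at this)]
            have h2 := LinearMap.finrank_range_add_finrank_ker Ht.mulVecLin
            rw [← Matrix.rank, hrank] at h2
            simp at h2
            omega
        have hmem : u ∈ LinearMap.ker Ht.mulVecLin := by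
          rw [LinearMap.mem_ker, Matrix.mulVecLin_apply, hu]
        rw [hkerEq, Submodule.mem_span_singleton] at hmem
        obtain ⟨a, rfl⟩ := hmem
        have : a * n = 0 := by
          simpa [Finset.mul_sum, mul_comm] using hsum
        rcases mul_eq_zero.1 this with h | h
        · simp [h]
        · exact absurd h (Nat.cast_ne_zero.2 (by omega))
      obtain ⟨cc, hcc, hcoer⟩ := coercive Ht M hpd hker
      exact forward_conv hn1 Ht M hone cc hcc hcoer x hx i j
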